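/- arXiv:1609.07862 — 4 statements merged into one kernel-verified Lean document; each statement's English description precedes it below -/
import Mathlib

section
/- Let C be a linear code over R = F_p[u]/⟨u^m − u⟩ of length n (an R-submodule of R^n), and let Φ : R^n → F_p^{mn} be the Gray map given componentwise by r ↦ (coefficient vector of r) · M · V, where M is the evaluation matrix and V is an invertible m×m matrix over F_p with V Vᵀ = λ I_m, λ ≠ 0. If C is self-dual with respect to the Euclidean inner product on R^n, then Φ(C) is self-orthogonal in F_p^{mn}: for all c₁, c₂ ∈ C, Φ(c₁) · Φ(c₂) = 0. -/
open Polynomial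

lemma monic_Xm_sub_X (p m : ℕ) [Fact p.Prime] (hm : 2 ≤ m) : ((X : (ZMod p)[X]) ^ m - X).Monic := by
  refine (monic_X_pow m).sub_of_left ?_
  rw [degree_X, degree_X_pow]
  exact_mod_cast (by omega : 1 < m)

/-- The evaluation matrix `M`. -/
def evalM (p m : ℕ) (ξ : ZMod p) : Matrix (Fin m) (Fin m) (ZMod p) :=
  Matrix.of fun k j =>
    if (j : ℕ) = 0 then (if (k : ℕ) = 0 then 1 else 0) else (ξ ^ ((j : ℕ) - 1)) ^ (k : ℕ)

/-- The Gray map on one component: take the coefficient vector of the (unique) representative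
of degree `< m` and multiply by `M * V`. -/
noncomputable def gray (p m : ℕ) [Fact p.Prime] (hm : 2 ≤ m) (ξ : ZMod p)
    (V : Matrix (Fin m) (Fin m) (ZMod p))
    (r : AdjoinRoot ((X : (ZMod p)[X]) ^ m - X)) : Fin m → ZMod p :=
  Matrix.vecMul
    (fun k : Fin m => (AdjoinRoot.modByMonicHom (monic_Xm_sub_X p m hm) r).coeff (k : ℕ))
    (evalM p m ξ * V)

/-- evaluation points -/
def pt (p m : ℕ) (ξ : ZMod p) (j : Fin m) : ZMod p :=
  if (j : ℕ) = 0 then 0 else ξ ^ ((j : ℕ) - 1)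

lemma pt_pow (p m : ℕ) (ξ : ZMod p) (hm : 2 ≤ m) (hξ : ξ ^ (m - 1) = 1) (j : Fin m) :
    (pt p m ξ j) ^ m = pt p m ξ j := by
  unfold pt
  split
  · exact zero_pow (by omega)
  · rw [← pow_mul]
    have : ((j : ℕ) - 1) * m = ((j : ℕ) - 1) * (m - 1) + ((j : ℕ) - 1) := by
      obtain ⟨m', rfl⟩ : ∃ m', m = m' + 1 := ⟨m - 1, by omega⟩
      simp [Nat.mul_succ]
    rw [this, pow_add, mul_comm ((j:ℕ)-1) (m-1), pow_mul, hξ, one_pow, one_mul]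

noncomputable def evalHom (p m : ℕ) [Fact p.Prime] (x : ZMod p) (hx : x ^ m = x) :
    AdjoinRoot ((X : (ZMod p)[X]) ^ m - X) →+* ZMod p :=
  AdjoinRoot.lift (RingHom.id (ZMod p)) x (by simp [hx])

lemma degree_Xm_sub_X (p m : ℕ) [Fact p.Prime] (hm : 2 ≤ m) :
    ((X : (ZMod p)[X]) ^ m - X).degree = (m : WithBot ℕ) := by
  rw [Polynomial.degree_sub_eq_left_of_degree_lt
    (by rw [degree_X, degree_X_pow]; exact_mod_cast (by omega : 1 < m)), degree_X_pow]

lemma evalHom_eq (p m : ℕ) [Fact p.Prime] (hm : 2 ≤ m) (x : ZMod p) (hx : x ^ m = x)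
    (r : AdjoinRoot ((X : (ZMod p)[X]) ^ m - X)) :
    evalHom p m x hx r =
      Polynomial.eval x (AdjoinRoot.modByMonicHom (monic_Xm_sub_X p m hm) r) := by
  obtain ⟨f, rfl⟩ := AdjoinRoot.mk_surjective r
  rw [AdjoinRoot.modByMonicHom_mk, evalHom, AdjoinRoot.lift_mk]
  rw [Polynomial.modByMonic_eq_sub_mul_div f ((X : (ZMod p)[X]) ^ m - X)]
  rw [show Polynomial.eval₂ (RingHom.id (ZMod p)) x f = Polynomial.eval x f from rfl]
  simp [hx]

lemma natDegree_mod_lt (p m : ℕ) [Fact p.Prime] (hm : 2 ≤ m)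
    (r : AdjoinRoot ((X : (ZMod p)[X]) ^ m - X)) :
    (AdjoinRoot.modByMonicHom (monic_Xm_sub_X p m hm) r).natDegree < m := by
  obtain ⟨f, rfl⟩ := AdjoinRoot.mk_surjective r
  rw [AdjoinRoot.modByMonicHom_mk]
  have h := Polynomial.degree_modByMonic_lt f (monic_Xm_sub_X p m hm)
  rw [degree_Xm_sub_X p m hm] at h
  by_cases h0 : f %ₘ ((X : (ZMod p)[X]) ^ m - X) = 0
  · rw [h0]; simpa using (by omega : 0 < m)
  · exact (Polynomial.natDegree_lt_iff_degree_lt h0).mpr h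

lemma vecMul_evalM (p m : ℕ) [Fact p.Prime] (hm : 2 ≤ m) (ξ : ZMod p)
    (hξ : ξ ^ (m - 1) = 1)
    (r : AdjoinRoot ((X : (ZMod p)[X]) ^ m - X)) (j : Fin m) :
    Matrix.vecMul
      (fun k : Fin m => (AdjoinRoot.modByMonicHom (monic_Xm_sub_X p m hm) r).coeff (k : ℕ))
      (evalM p m ξ) j = evalHom p m (pt p m ξ j) (pt_pow p m ξ hm hξ j) r := by
  set f := AdjoinRoot.modByMonicHom (monic_Xm_sub_X p m hm) r with hf
  rw [evalHom_eq p m hm, ← hf]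
  have hdeg := natDegree_mod_lt p m hm r
  rw [← hf] at hdeg
  rw [Matrix.vecMul, dotProduct]
  unfold evalM pt
  by_cases hj : (j : ℕ) = 0
  · simp only [Matrix.of_apply, hj, if_pos rfl, if_true]
    rw [Finset.sum_eq_single (⟨0, by omega⟩ : Fin m)]
    · simp [Polynomial.eval_zero, Polynomial.coeff_zero_eq_eval_zero]
    · intro k _ hk
      have : (k : ℕ) ≠ 0 := by
        intro h; exact hk (Fin.ext h)
      simp [this]
    · simp
  · simp only [Matrix.of_apply, hj, if_neg hj, if_false]
    rw [Polynomial.eval_eq_sum_range' (lt_of_lt_of_le hdeg (le_refl m)),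
      ← Fin.sum_univ_eq_sum_range]

open Matrix in
theorem stmt7 (p m n : ℕ) [Fact p.Prime] (hm : 2 ≤ m) (hdvd : (m - 1) ∣ (p - 1))
    (ξ : ZMod p) (hord : orderOf ξ = m - 1)
    (V : Matrix (Fin m) (Fin m) (ZMod p)) (hVinv : IsUnit V.det)
    (lam : ZMod p) (hlam : lam ≠ 0)
    (hV : V * V.transpose = lam • (1 : Matrix (Fin m) (Fin m) (ZMod p)))
    (C : Submodule (AdjoinRoot ((X : (ZMod p)[X]) ^ m - X))
      (Fin n → AdjoinRoot ((X : (ZMod p)[X]) ^ m - X)))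
    (hC : ∀ x, x ∈ C ↔ ∀ y ∈ C, ∑ i, x i * y i = 0) :
    ∀ c₁ ∈ C, ∀ c₂ ∈ C,
      ∑ i, dotProduct (gray p m hm ξ V (c₁ i)) (gray p m hm ξ V (c₂ i)) = 0 := by
  intro c₁ hc₁ c₂ hc₂
  have hξ : ξ ^ (m - 1) = 1 := by rw [← hord]; exact pow_orderOf_eq_one ξ
  have hzero : ∑ i, c₁ i * c₂ i = 0 := (hC c₁).mp hc₁ c₂ hc₂
  have key : ∀ r s : AdjoinRoot ((X : (ZMod p)[X]) ^ m - X),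
      dotProduct (gray p m hm ξ V r) (gray p m hm ξ V s)
        = lam * ∑ j : Fin m, evalHom p m (pt p m ξ j) (pt_pow p m ξ hm hξ j) (r * s) := by
    intro r s
    set a := fun k : Fin m =>
      (AdjoinRoot.modByMonicHom (monic_Xm_sub_X p m hm) r).coeff (k : ℕ) with ha
    set b := fun k : Fin m =>
      (AdjoinRoot.modByMonicHom (monic_Xm_sub_X p m hm) s).coeff (k : ℕ) with hb
    have h1 : gray p m hm ξ V r = Matrix.vecMul a (evalM p m ξ * V) := rfl
    have h2 : gray p m hm ξ V s = Matrix.vecMul b (evalM p m ξ * V) := rfl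
    have hMM : (evalM p m ξ * V) * (evalM p m ξ * V)ᵀ
        = lam • (evalM p m ξ * (evalM p m ξ)ᵀ) := by
      rw [Matrix.transpose_mul, Matrix.mul_assoc, ← Matrix.mul_assoc V, hV,
        Matrix.smul_mul, Matrix.one_mul, Matrix.mul_smul]
    rw [h1, h2,
      show Matrix.vecMul b (evalM p m ξ * V) = (evalM p m ξ * V)ᵀ *ᵥ b from
        (Matrix.mulVec_transpose _ _).symm,
      dotProduct_mulVec, Matrix.vecMul_vecMul,
      hMM,
      show Matrix.vecMul a (lam • (evalM p m ξ * (evalM p m ξ)ᵀ))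
          = lam • Matrix.vecMul a (evalM p m ξ * (evalM p m ξ)ᵀ) by
        ext j
        simp only [Matrix.vecMul, dotProduct, Matrix.smul_apply, Pi.smul_apply,
          smul_eq_mul, Finset.mul_sum]
        exact Finset.sum_congr rfl fun k _ => by ring,
      smul_dotProduct, ← Matrix.vecMul_vecMul,
      ← dotProduct_mulVec, Matrix.mulVec_transpose]
    have := fun j => vecMul_evalM p m hm ξ hξ r j
    have hb' := fun j => vecMul_evalM p m hm ξ hξ s j
    rw [dotProduct]
    congr 1
    refine Finset.sum_congr rfl fun j _ => ?_
    rw [this j, hb' j]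
    exact (_root_.map_mul _ r s).symm
  calc ∑ i, dotProduct (gray p m hm ξ V (c₁ i)) (gray p m hm ξ V (c₂ i))
      = ∑ i, lam * ∑ j : Fin m,
          evalHom p m (pt p m ξ j) (pt_pow p m ξ hm hξ j) (c₁ i * c₂ i) :=
        Finset.sum_congr rfl fun i _ => key (c₁ i) (c₂ i)
    _ = lam * ∑ j : Fin m,
          evalHom p m (pt p m ξ j) (pt_pow p m ξ hm hξ j) (∑ i, c₁ i * c₂ i) := by
        rw [← Finset.mul_sum, Finset.sum_comm]
        congr 1
        exact Finset.sum_congr rfl fun j _ => (map_sum _ _ _).symm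
    _ = 0 := by rw [hzero]; simp
end

section
/- Let S be a finite commutative ring and let C be an ideal of S[x]/⟨x^n − 1⟩ generated by an idempotent E (so E² = E and C = ⟨E⟩). Then the dual code C^⊥ (with respect to the Euclidean inner product on S^n, identifying polynomials with coefficient vectors) is the ideal generated by the idempotent 1 − E(x^{−1}), where E(x^{−1}) denotes E with x replaced by x^{n−1}. -/
open Polynomial

lemma monic_Xn_sub_one (S : Type*) [CommRing S] (n : ℕ) (hn : 0 < n) :
    ((X : S[X]) ^ n - 1).Monic := by
  have h := monic_X_pow_sub_C (1 : S) (by omega : n ≠ 0)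
  simpa using h

section Aux

variable {S : Type*} [CommRing S] {n : ℕ}

lemma rootn_eq_one (hn : 0 < n) :
    (AdjoinRoot.root ((X : S[X]) ^ n - 1)) ^ n = 1 := by
  have h : AdjoinRoot.mk ((X : S[X]) ^ n - 1) ((X : S[X]) ^ n - 1) = 0 :=
    AdjoinRoot.mk_self
  rwa [map_sub, map_pow, AdjoinRoot.mk_X, map_one, sub_eq_zero] at h

lemma root_pow_mod (hn : 0 < n) (m : ℕ) :
    (AdjoinRoot.root ((X : S[X]) ^ n - 1)) ^ m
      = (AdjoinRoot.root ((X : S[X]) ^ n - 1)) ^ (m % n) := by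
  conv_lhs => rw [← Nat.div_add_mod m n]
  rw [pow_add, pow_mul, rootn_eq_one hn, one_pow, one_mul]

lemma degree_Xn_sub_one [Nontrivial S] (hn : 0 < n) :
    ((X : S[X]) ^ n - 1).degree = n := by
  simpa using degree_X_pow_sub_C hn (1 : S)

lemma rho_root_pow [Nontrivial S] (hn : 0 < n) {k : ℕ} (hk : k < n) :
    AdjoinRoot.modByMonicHom (monic_Xn_sub_one S n hn)
      ((AdjoinRoot.root ((X : S[X]) ^ n - 1)) ^ k) = X ^ k := by
  have h : ((AdjoinRoot.root ((X : S[X]) ^ n - 1)) ^ k)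
      = AdjoinRoot.mk _ (X ^ k) := by rw [map_pow, AdjoinRoot.mk_X]
  rw [h, AdjoinRoot.modByMonicHom_mk,
    (modByMonic_eq_self_iff (monic_Xn_sub_one S n hn)).2]
  rw [degree_X_pow, degree_Xn_sub_one hn]
  exact_mod_cast hk

lemma natDegree_rho_lt [Nontrivial S] (hn : 0 < n)
    (a : AdjoinRoot ((X : S[X]) ^ n - 1)) :
    (AdjoinRoot.modByMonicHom (monic_Xn_sub_one S n hn) a).natDegree < n := by
  obtain ⟨p, rfl⟩ := AdjoinRoot.mk_surjective a
  rw [AdjoinRoot.modByMonicHom_mk]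
  by_cases hz : p %ₘ ((X : S[X]) ^ n - 1) = 0
  · rw [hz]; simpa using hn
  · rw [natDegree_lt_iff_degree_lt hz]
    have h := degree_modByMonic_lt p (monic_Xn_sub_one S n hn)
    rwa [degree_Xn_sub_one hn] at h

lemma aeval_root_inv (hn : 0 < n) :
    Polynomial.aeval ((AdjoinRoot.root ((X : S[X]) ^ n - 1)) ^ (n - 1))
      ((X : S[X]) ^ n - 1) = 0 := by
  rw [map_sub, map_one, map_pow, aeval_X, ← pow_mul, root_pow_mod hn,
    Nat.mul_mod_left, pow_zero, sub_self]

/-- The ring endomorphism of `S[x]/(x^n-1)` induced by `x ↦ x^{n-1}`. -/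
noncomputable def Psi (S : Type*) [CommRing S] (n : ℕ) (hn : 0 < n) :
    AdjoinRoot ((X : S[X]) ^ n - 1) →ₐ[S] AdjoinRoot ((X : S[X]) ^ n - 1) :=
  AdjoinRoot.liftAlgHom _ (Algebra.ofId S _) ((AdjoinRoot.root ((X : S[X]) ^ n - 1)) ^ (n - 1))
    (by have h := aeval_root_inv (S := S) hn; rw [aeval_def] at h; exact h)

lemma Psi_eq (hn : 0 < n) (x : AdjoinRoot ((X : S[X]) ^ n - 1)) :
    Polynomial.aeval ((AdjoinRoot.root ((X : S[X]) ^ n - 1)) ^ (n - 1))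
      (AdjoinRoot.modByMonicHom (monic_Xn_sub_one S n hn) x) = Psi S n hn x := by
  obtain ⟨p, rfl⟩ := AdjoinRoot.mk_surjective x
  rw [AdjoinRoot.modByMonicHom_mk]
  change _ = Polynomial.aeval _ p
  conv_rhs => rw [← modByMonic_add_div p ((X : S[X]) ^ n - 1)]
  rw [map_add, map_mul, aeval_root_inv hn, zero_mul, add_zero]

lemma Psi_root (hn : 0 < n) :
    Psi S n hn (AdjoinRoot.root ((X : S[X]) ^ n - 1))
      = (AdjoinRoot.root ((X : S[X]) ^ n - 1)) ^ (n - 1) := by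
  exact AdjoinRoot.liftAlgHom_root _ _ _ (aeval_root_inv hn)

lemma modfact (hn : 0 < n) {i j : ℕ} (hi : i < n) (hj : j < n) :
    ((i + (n - 1) * j) % n = 0) ↔ i = j := by
  have e1 : (n - 1) * j + j = n * j := by
    cases n with
    | zero => omega
    | succ m => simp [Nat.succ_sub_one, Nat.succ_mul]
  rcases le_or_gt j i with h | h
  · have e : i + (n - 1) * j = (i - j) + n * j := by
      generalize (n - 1) * j = m at e1 ⊢
      generalize n * j = M at e1 ⊢
      omega
    rw [e, Nat.add_mul_mod_self_left, Nat.mod_eq_of_lt (by omega : i - j < n)]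
    omega
  · have e2 : n * (j - 1) + n = n * j := by
      cases j with
      | zero => omega
      | succ m => simp [Nat.succ_sub_one, Nat.mul_succ]
    have e : i + (n - 1) * j = (n + i - j) + n * (j - 1) := by
      generalize (n - 1) * j = m at e1 ⊢
      generalize n * (j - 1) = m2 at e2 ⊢
      generalize n * j = M at e1 e2 ⊢
      omega
    rw [e, Nat.add_mul_mod_self_left, Nat.mod_eq_of_lt (by omega : n + i - j < n)]
    omega

lemma key [Nontrivial S] (hn : 0 < n) (a b : AdjoinRoot ((X : S[X]) ^ n - 1)) :
    (AdjoinRoot.modByMonicHom (monic_Xn_sub_one S n hn) (a * Psi S n hn b)).coeff 0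
      = ∑ k ∈ Finset.range n,
          (AdjoinRoot.modByMonicHom (monic_Xn_sub_one S n hn) a).coeff k *
            (AdjoinRoot.modByMonicHom (monic_Xn_sub_one S n hn) b).coeff k := by
  set ρ := AdjoinRoot.modByMonicHom (monic_Xn_sub_one S n hn) with hρ
  have hmul : a * Psi S n hn b
      = ∑ i ∈ Finset.range n, ∑ j ∈ Finset.range n,
          ((ρ a).coeff i * (ρ b).coeff j) •
            (AdjoinRoot.root ((X : S[X]) ^ n - 1)) ^ ((i + (n - 1) * j) % n) := by
    conv_lhs =>
      rw [← AdjoinRoot.mk_leftInverse (monic_Xn_sub_one S n hn) a,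
          ← Psi_eq hn b, ← AdjoinRoot.aeval_eq]
    rw [aeval_eq_sum_range' (natDegree_rho_lt hn a),
        aeval_eq_sum_range' (natDegree_rho_lt hn b), Finset.sum_mul_sum]
    refine Finset.sum_congr rfl fun i hi => Finset.sum_congr rfl fun j hj => ?_
    rw [smul_mul_smul_comm, ← pow_mul, ← pow_add, root_pow_mod hn]
  rw [hmul, map_sum, finset_sum_coeff]
  refine Finset.sum_congr rfl fun i hi => ?_
  rw [map_sum, finset_sum_coeff]
  have hterm : ∀ j ∈ Finset.range n,
      ((ρ (((ρ a).coeff i * (ρ b).coeff j) •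
        (AdjoinRoot.root ((X : S[X]) ^ n - 1)) ^ ((i + (n - 1) * j) % n))).coeff 0)
      = if i = j then (ρ a).coeff i * (ρ b).coeff j else 0 := by
    intro j hj
    rw [map_smul, coeff_smul, rho_root_pow hn (Nat.mod_lt _ hn), coeff_X_pow,
      smul_eq_mul, mul_ite, mul_one, mul_zero]
    congr 1
    exact propext (eq_comm.trans
      (modfact hn (Finset.mem_range.mp hi) (Finset.mem_range.mp hj)))
  rw [Finset.sum_congr rfl hterm, Finset.sum_ite_eq (Finset.range n) i
    (fun j => (ρ a).coeff i * (ρ b).coeff j), if_pos hi]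

lemma key2 [Nontrivial S] (hn : 0 < n) (c : AdjoinRoot ((X : S[X]) ^ n - 1))
    {k : ℕ} (hk : k < n) :
    (AdjoinRoot.modByMonicHom (monic_Xn_sub_one S n hn)
      (c * ((AdjoinRoot.root ((X : S[X]) ^ n - 1)) ^ (n - 1)) ^ k)).coeff 0
      = (AdjoinRoot.modByMonicHom (monic_Xn_sub_one S n hn) c).coeff k := by
  have h := key hn c ((AdjoinRoot.root ((X : S[X]) ^ n - 1)) ^ k)
  rw [show Psi S n hn ((AdjoinRoot.root ((X : S[X]) ^ n - 1)) ^ k)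
      = ((AdjoinRoot.root ((X : S[X]) ^ n - 1)) ^ (n - 1)) ^ k from by
    rw [map_pow, Psi_root hn]] at h
  rw [h, rho_root_pow hn hk]
  simp only [coeff_X_pow, mul_ite, mul_one, mul_zero]
  rw [Finset.sum_ite_eq' (Finset.range n) k, if_pos (Finset.mem_range.mpr hk)]

end Aux

theorem stmt8 (S : Type*) [CommRing S] [Fintype S] (n : ℕ) (hn : 0 < n)
    (E : AdjoinRoot ((X : S[X]) ^ n - 1)) (hE : E ^ 2 = E) :
    ∀ f : AdjoinRoot ((X : S[X]) ^ n - 1),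
      (∀ g ∈ Ideal.span {E},
          ∑ k ∈ Finset.range n,
            (AdjoinRoot.modByMonicHom (monic_Xn_sub_one S n hn) f).coeff k *
              (AdjoinRoot.modByMonicHom (monic_Xn_sub_one S n hn) g).coeff k = 0) ↔
        f ∈ Ideal.span
          {1 - Polynomial.aeval ((AdjoinRoot.root ((X : S[X]) ^ n - 1)) ^ (n - 1))
              (AdjoinRoot.modByMonicHom (monic_Xn_sub_one S n hn) E)} := by
  intro f
  rcases subsingleton_or_nontrivial S with hS | hS
  · constructor
    · intro _
      have hsub : Subsingleton (AdjoinRoot ((X : S[X]) ^ n - 1)) := by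
        constructor; intro a b
        obtain ⟨p, rfl⟩ := AdjoinRoot.mk_surjective a
        obtain ⟨q, rfl⟩ := AdjoinRoot.mk_surjective b
        rw [Subsingleton.elim p q]
      rw [Subsingleton.elim f 0]
      exact Ideal.zero_mem _
    · intro _ g _
      exact Finset.sum_eq_zero fun k _ => Subsingleton.elim _ _
  · rw [Psi_eq hn E]
    have hψE : Psi S n hn E * Psi S n hn E = Psi S n hn E := by
      rw [← map_mul, ← sq, hE]
    constructor
    · intro H
      have hz : f * Psi S n hn E = 0 := by
        have hcoeff : AdjoinRoot.modByMonicHom (monic_Xn_sub_one S n hn)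
            (f * Psi S n hn E) = 0 := by
          ext k
          rw [coeff_zero]
          rcases lt_or_ge k n with hk | hk
          · have hg : (AdjoinRoot.root ((X : S[X]) ^ n - 1)) ^ k * E ∈
                Ideal.span {E} := Ideal.mem_span_singleton'.mpr ⟨_, rfl⟩
            have h1 := H _ hg
            rw [← key hn f _] at h1
            rw [show f * Psi S n hn ((AdjoinRoot.root ((X : S[X]) ^ n - 1)) ^ k * E)
                = (f * Psi S n hn E) *
                  ((AdjoinRoot.root ((X : S[X]) ^ n - 1)) ^ (n - 1)) ^ k from by
              rw [map_mul, map_pow, Psi_root hn]; ring] at h1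
            rwa [key2 hn _ hk] at h1
          · exact coeff_eq_zero_of_natDegree_lt
              (lt_of_lt_of_le (natDegree_rho_lt hn _) hk)
        have h2 := AdjoinRoot.mk_leftInverse (monic_Xn_sub_one S n hn)
          (f * Psi S n hn E)
        rwa [hcoeff, map_zero, eq_comm] at h2
      refine Ideal.mem_span_singleton'.mpr ⟨f, ?_⟩
      rw [mul_sub, mul_one, hz, sub_zero]
    · intro hf g hg
      obtain ⟨c, hc⟩ := Ideal.mem_span_singleton'.mp hf
      obtain ⟨d, hd⟩ := Ideal.mem_span_singleton'.mp hg
      rw [← key hn f g]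
      have h0 : f * Psi S n hn g = 0 := by
        rw [← hc, ← hd, map_mul]
        have h1 : (1 - Psi S n hn E) * Psi S n hn E = 0 := by
          rw [sub_mul, one_mul, hψE, sub_self]
        calc c * (1 - Psi S n hn E) * (Psi S n hn d * Psi S n hn E)
            = c * Psi S n hn d * ((1 - Psi S n hn E) * Psi S n hn E) := by ring
          _ = 0 := by rw [h1, mul_zero]
      rw [h0, map_zero, coeff_zero]
end

section
/- In R_q = R[x]/⟨x^q − 1⟩, let D = ε d₁ + (1−ε) d₂ and D' = ε d₂ + (1−ε) d₁ where ε is an idempotent of R and d₁, d₂ are the odd-like QR idempotents over F_p with d₁ + d₂ = 1 + (1/q)h and d₁d₂ = (1/q)h. Then the ideals Q = ⟨D⟩ and Q' = ⟨D'⟩ satisfy Q ∩ Q' = ⟨(1/q)h⟩ and Q + Q' = R_q. -/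
open Polynomial

/-- The ring `R = F_p[u]/⟨u^m - u⟩`. -/
abbrev Rring (p m : ℕ) := AdjoinRoot ((X : (ZMod p)[X]) ^ m - X)

/-- The ring `R_q = R[x]/⟨x^q - 1⟩`. -/
abbrev Rq (p m q : ℕ) := AdjoinRoot ((X : (Rring p m)[X]) ^ q - 1)

/-- The element `(1/q)·h = (1/q)(1 + x + ⋯ + x^{q-1})` of `R_q`. -/
noncomputable def Hq (p m q : ℕ) [Fact p.Prime] : Rq p m q :=
  AdjoinRoot.of _ (AdjoinRoot.of _ ((q : ZMod p)⁻¹)) *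
    ∑ k ∈ Finset.range q, (AdjoinRoot.root ((X : (Rring p m)[X]) ^ q - 1)) ^ k

/-- For idempotents `e, f` in a commutative ring, `⟨e⟩ ⊓ ⟨f⟩ = ⟨ef⟩`. -/
lemma span_inf_idem {R : Type*} [CommRing R] (e f : R)
    (he : e ^ 2 = e) (hf : f ^ 2 = f) :
    Ideal.span {e} ⊓ Ideal.span {f} = Ideal.span {e * f} := by
  apply le_antisymm
  · rintro x ⟨hx1, hx2⟩
    rw [SetLike.mem_coe, Ideal.mem_span_singleton] at hx1 hx2
    obtain ⟨a, rfl⟩ := hx1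
    obtain ⟨b, hb⟩ := hx2
    rw [Ideal.mem_span_singleton]
    refine ⟨b, ?_⟩
    calc e * a = e * (e * a) := by linear_combination (-a) * he
    _ = e * (f * b) := by rw [hb]
    _ = e * f * b := by ring
  · refine le_inf ?_ ?_ <;> rw [Ideal.span_singleton_le_iff_mem, Ideal.mem_span_singleton]
    · exact ⟨f, rfl⟩
    · exact ⟨e, mul_comm e f⟩

theorem stmt16 (p m q : ℕ) [Fact p.Prime] [Fact q.Prime] (hm : 2 ≤ m)
    (hdvd : (m - 1) ∣ (p - 1)) (hq2 : q ≠ 2) (hsq : IsSquare ((p : ZMod q)))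
    (ε : Rring p m) (hε : ε ^ 2 = ε)
    (d₁ d₂ : Rq p m q) (hd₁ : d₁ ^ 2 = d₁) (hd₂ : d₂ ^ 2 = d₂)
    (hsum : d₁ + d₂ = 1 + Hq p m q) (hprod : d₁ * d₂ = Hq p m q) :
    Ideal.span {AdjoinRoot.of _ ε * d₁ + AdjoinRoot.of _ (1 - ε) * d₂} ⊓
        Ideal.span {AdjoinRoot.of _ ε * d₂ + AdjoinRoot.of _ (1 - ε) * d₁} =
      Ideal.span {Hq p m q} ∧
    Ideal.span {AdjoinRoot.of _ ε * d₁ + AdjoinRoot.of _ (1 - ε) * d₂} ⊔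
        Ideal.span {AdjoinRoot.of _ ε * d₂ + AdjoinRoot.of _ (1 - ε) * d₁} =
      (⊤ : Ideal (Rq p m q)) := by
  set e : Rq p m q := AdjoinRoot.of _ ε with he_def
  have hone : AdjoinRoot.of ((X : (Rring p m)[X]) ^ q - 1) (1 - ε) = 1 - e := by
    rw [map_sub, map_one]
  have he2 : e ^ 2 = e := by
    rw [he_def, ← map_pow, hε]
  have he0 : e * (1 - e) = 0 := by linear_combination -he2
  set D : Rq p m q := e * d₁ + (1 - e) * d₂ with hD_def
  set D' : Rq p m q := e * d₂ + (1 - e) * d₁ with hD'_def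
  have hDD' : D * D' = Hq p m q := by
    rw [hD_def, hD'_def]
    linear_combination (d₁ ^ 2 + d₂ ^ 2 - 2 * (d₁ * d₂)) * he0 + hprod
  have hDsum : D + D' = 1 + Hq p m q := by
    rw [hD_def, hD'_def]; linear_combination hsum
  have hDi : D ^ 2 = D := by
    rw [hD_def]
    linear_combination (2 * (d₁ * d₂) - d₁ ^ 2 - d₂ ^ 2) * he0 + e * hd₁ + (1 - e) * hd₂
  have hD'i : D' ^ 2 = D' := by
    rw [hD'_def]
    linear_combination (2 * (d₁ * d₂) - d₁ ^ 2 - d₂ ^ 2) * he0 + e * hd₂ + (1 - e) * hd₁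
  rw [hone]
  constructor
  · rw [span_inf_idem D D' hDi hD'i, hDD']
  · rw [Ideal.eq_top_iff_one]
    have h1 : (1 : Rq p m q) = (1 - D') * D + 1 * D' := by
      linear_combination hDD' - hDsum
    have hmem := Submodule.add_mem_sup
      (Ideal.mem_span_singleton.mpr ⟨1 - D', mul_comm _ _⟩ :
        (1 - D') * D ∈ Ideal.span {D})
      (Ideal.mem_span_singleton.mpr ⟨1, mul_comm _ _⟩ :
        1 * D' ∈ Ideal.span {D'})
    rwa [← h1] at hmem
end

section
/- In R_q = R[x]/⟨x^q − 1⟩, let E = ε e₁ + (1−ε) e₂ with ε ∈ R idempotent and e₁, e₂ the even-like QR idempotents satisfying e₁·(1/q)h = 0, e₂·(1/q)h = 0, e₁ + (1/q)h = d₁, e₂ + (1/q)h = d₂. Then ⟨E⟩ ∩ ⟨(1/q)h⟩ = {0} and ⟨E⟩ + ⟨(1/q)h⟩ = ⟨ε d₁ + (1−ε) d₂⟩. -/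
open Polynomial

theorem stmt17 (p m q : ℕ) [Fact p.Prime] [Fact q.Prime] (hm : 2 ≤ m)
    (hdvd : (m - 1) ∣ (p - 1)) (hq2 : q ≠ 2) (hsq : IsSquare ((p : ZMod q)))
    (ε : Rring p m) (hε : ε ^ 2 = ε)
    (d₁ d₂ e₁ e₂ : Rq p m q) (he₁ : e₁ ^ 2 = e₁) (he₂ : e₂ ^ 2 = e₂)
    (hH : Hq p m q ^ 2 = Hq p m q)
    (he₁H : e₁ * Hq p m q = 0) (he₂H : e₂ * Hq p m q = 0)
    (hd₁ : e₁ + Hq p m q = d₁) (hd₂ : e₂ + Hq p m q = d₂) :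
    Ideal.span {AdjoinRoot.of _ ε * e₁ + AdjoinRoot.of _ (1 - ε) * e₂} ⊓
        Ideal.span {Hq p m q} = (⊥ : Ideal (Rq p m q)) ∧
    Ideal.span {AdjoinRoot.of _ ε * e₁ + AdjoinRoot.of _ (1 - ε) * e₂} ⊔
        Ideal.span {Hq p m q} =
      Ideal.span {AdjoinRoot.of _ ε * d₁ + AdjoinRoot.of _ (1 - ε) * d₂} := by
  subst hd₁ hd₂
  set H := Hq p m q with hHdef
  set ε' : Rq p m q := AdjoinRoot.of _ ε with hε'
  have hof : AdjoinRoot.of ((X : (Rring p m)[X]) ^ q - 1) (1 - ε) = 1 - ε' := by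
    rw [map_sub, map_one]
  rw [hof]
  set E : Rq p m q := ε' * e₁ + (1 - ε') * e₂ with hE
  have hEH : E * H = 0 := by
    rw [hE, add_mul, mul_assoc, mul_assoc, he₁H, he₂H, mul_zero, mul_zero, add_zero]
  have hHH : H * H = H := by rw [← sq, hH]
  constructor
  · refine le_bot_iff.mp fun z hz => ?_
    rw [Ideal.mem_inf] at hz
    obtain ⟨a, ha⟩ := Ideal.mem_span_singleton.mp hz.1
    obtain ⟨b, hb⟩ := Ideal.mem_span_singleton.mp hz.2
    have h1 : z * H = 0 := by
      rw [ha]; calc E * a * H = E * H * a := by ring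
        _ = 0 := by rw [hEH, zero_mul]
    have h2 : z * H = z := by
      rw [hb]; calc H * b * H = H * H * b := by ring
        _ = H * b := by rw [hHH]
    rw [h2] at h1
    simpa using h1
  · have key : ε' * (e₁ + H) + (1 - ε') * (e₂ + H) = E + H := by rw [hE]; ring
    rw [key]
    apply le_antisymm
    · rw [sup_le_iff]
      constructor <;> rw [Ideal.span_le, Set.singleton_subset_iff] <;>
        rw [SetLike.mem_coe, Ideal.mem_span_singleton]
      · exact ⟨1 - H, by rw [mul_sub, mul_one, add_mul, hEH, hHH, add_sub_add_right_eq_sub, sub_zero]⟩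
      · exact ⟨H, by rw [add_mul, hEH, hHH, zero_add]⟩
    · rw [Ideal.span_le, Set.singleton_subset_iff]
      exact Ideal.add_mem _
        (Ideal.mem_sup_left (Ideal.subset_span rfl))
        (Ideal.mem_sup_right (Ideal.subset_span rfl))
end
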